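/- For every z in the open first quadrant Q = {z ∈ ℂ : Re z > 0, Im z > 0}, the real part of 1 + (1+i)·F(z) is strictly positive, where F(z) := (1/(2π))·(Log((1+z)/(1−z)) + i·Log((1+iz)/(1−iz))). -/

import Mathlib

open Complex

/-- `F(z) = (1/(2π))·(Log((1+z)/(1−z)) + i·Log((1+iz)/(1−iz)))`. -/
noncomputable def F (z : ℂ) : ℂ :=
  (1 / (2 * (Real.pi : ℂ))) *
    (Complex.log ((1 + z) / (1 - z)) + Complex.I * Complex.log ((1 + Complex.I * z) / (1 - Complex.I * z)))

/-- On the open first quadrant, `Re(1 + (1+i)·F(z)) > 0`. -/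
theorem re_pos_of_first_quadrant (z : ℂ) (hre : 0 < z.re) (him : 0 < z.im) :
    0 < (1 + (1 + Complex.I) * F z).re := by
  have hpi : (0:ℝ) < Real.pi := Real.pi_pos
  set w₁ : ℂ := (1 + z) / (1 - z) with hw₁
  set w₂ : ℂ := (1 + Complex.I * z) / (1 - Complex.I * z) with hw₂
  have hd1 : (1 - z) ≠ 0 := by
    intro h
    have : (1 - z).im = 0 := by rw [h]; simp
    simp at this
    linarith
  have hd2 : (1 - Complex.I * z) ≠ 0 := by
    intro h
    have : (1 - Complex.I * z).re = 0 := by rw [h]; simp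
    simp [Complex.mul_re] at this
    linarith
  have hd1' : (1 + z) ≠ 0 := by
    intro h
    have : (1 + z).im = 0 := by rw [h]; simp
    simp at this
    linarith
  have hd2' : (1 + Complex.I * z) ≠ 0 := by
    intro h
    have : (1 + Complex.I * z).im = 0 := by rw [h]; simp
    simp [Complex.mul_im] at this
    linarith
  have hp1 : 0 < (1 - z.re) * (1 - z.re) + z.im * z.im := by nlinarith [sq_nonneg (1 - z.re)]
  have hp2 : 0 < (1 + z.im) * (1 + z.im) + z.re * z.re := by nlinarith
  have hn1 : 0 < (1 + z.re) * (1 + z.re) + z.im * z.im := by nlinarith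
  have hn2 : 0 < (1 - z.im) * (1 - z.im) + z.re * z.re := by nlinarith [sq_nonneg (1 - z.im)]
  -- imaginary parts positive
  have him1 : 0 < w₁.im := by
    rw [hw₁, Complex.div_im]
    simp only [Complex.normSq_apply, Complex.add_re, Complex.add_im, Complex.sub_re,
      Complex.sub_im, Complex.one_re, Complex.one_im]
    rw [div_sub_div_same]
    apply div_pos <;> nlinarith
  have him2 : 0 < w₂.im := by
    rw [hw₂, Complex.div_im]
    simp only [Complex.normSq_apply, Complex.add_re, Complex.add_im, Complex.sub_re,
      Complex.sub_im, Complex.one_re, Complex.one_im, Complex.mul_re, Complex.mul_im,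
      Complex.I_re, Complex.I_im]
    rw [div_sub_div_same]
    apply div_pos <;> nlinarith
  have hw1ne : w₁ ≠ 0 := fun h => by simp [h] at him1
  have hw2ne : w₂ ≠ 0 := fun h => by simp [h] at him2
  -- abs comparison
  have key : Complex.normSq (1 + Complex.I * z) * Complex.normSq (1 - z) <
      Complex.normSq (1 + z) * Complex.normSq (1 - Complex.I * z) := by
    simp only [Complex.normSq_apply, Complex.add_re, Complex.add_im, Complex.sub_re,
      Complex.sub_im, Complex.one_re, Complex.one_im, Complex.mul_re, Complex.mul_im,
      Complex.I_re, Complex.I_im]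
    nlinarith [mul_pos him hp1, mul_pos hre hn2, mul_pos hre him]
  have habs : ‖w₂‖ < ‖w₁‖ := by
    rw [hw₁, hw₂, norm_div, norm_div,
      div_lt_div_iff₀ (norm_pos_iff.mpr hd2) (norm_pos_iff.mpr hd1)]
    rw [← Complex.sq_norm, ← Complex.sq_norm, ← Complex.sq_norm, ← Complex.sq_norm] at key
    nlinarith [norm_nonneg (1 + Complex.I * z), norm_nonneg (1 - z),
      norm_nonneg (1 + z), norm_nonneg (1 - Complex.I * z),
      mul_nonneg (norm_nonneg (1 + Complex.I * z)) (norm_nonneg (1 - z)),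
      mul_nonneg (norm_nonneg (1 + z)) (norm_nonneg (1 - Complex.I * z))]
  have harg1 : Complex.arg w₁ < Real.pi := Complex.arg_lt_pi_iff.mpr (Or.inr (ne_of_gt him1))
  have harg2 : Complex.arg w₂ < Real.pi := Complex.arg_lt_pi_iff.mpr (Or.inr (ne_of_gt him2))
  have hlog : Real.log ‖w₂‖ < Real.log ‖w₁‖ :=
    Real.log_lt_log (norm_pos_iff.mpr hw2ne) habs
  have hre' : (1 + (1 + Complex.I) * F z).re = 1 + (1/(2*Real.pi)) *
      ((Complex.log w₁).re - (Complex.log w₁).im - (Complex.log w₂).re - (Complex.log w₂).im) := by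
    simp [F, ← hw₁, ← hw₂, Complex.add_re, Complex.mul_re, Complex.mul_im, Complex.div_re,
      Complex.div_im, Complex.normSq_apply]
    ring
  rw [hre', Complex.log_re, Complex.log_re, Complex.log_im, Complex.log_im]
  have hc : (0:ℝ) < 1/(2*Real.pi) := by positivity
  have hkey : -(2*Real.pi) < Real.log ‖w₁‖ - Complex.arg w₁
      - Real.log ‖w₂‖ - Complex.arg w₂ := by linarith
  have h1 := mul_lt_mul_of_pos_left hkey hc
  have h2 : 1/(2*Real.pi) * (-(2*Real.pi)) = -1 := by field_simp
  linarith
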